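/- Let G be a simple graph and let a_0, a_1, ..., a_{ℓ-1} be a non-empty closed walk in G (indices taken modulo ℓ, with a_ℓ = a_0) whose underlying subgraph (the locus: vertices appearing in the walk, edges between consecutive vertices of the walk) contains no cycle. Let a be any vertex of the walk different from a_0, let i be the smallest index with 0 < i < ℓ and a_i = a, and let j be the largest such index. Then a_{j+1} = a_{i-1}. -/

import Mathlib

variable {V : Type*}

/-- `a 0, …, a ℓ` is a walk in `G`: consecutive vertices adjacent (hence distinct). -/
def IsWalk (G : SimpleGraph V) (a : ℕ → V) (ℓ : ℕ) : Prop :=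
  ∀ i, i < ℓ → G.Adj (a i) (a (i + 1))

/-- `a 0, …, a (ℓ-1)` is a closed walk (tour) of length `ℓ` in `G`. -/
def IsTour (G : SimpleGraph V) (a : ℕ → V) (ℓ : ℕ) : Prop :=
  ∀ i, i < ℓ → G.Adj (a i) (a ((i + 1) % ℓ))

/-- A cycle (closed walk of length ≥ 3 with pairwise distinct vertices) all of whose
edges satisfy the edge relation `R`. -/
def IsCycleOn (R : V → V → Prop) (c : ℕ → V) (n : ℕ) : Prop :=
  3 ≤ n ∧ (∀ i, i < n → ∀ j, j < n → c i = c j → i = j) ∧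
    ∀ i, i < n → R (c i) (c ((i + 1) % n))

/-- Edge relation of the locus of the closed walk `a 0, …, a (ℓ-1)`. -/
def tourEdge (a : ℕ → V) (ℓ : ℕ) (u v : V) : Prop :=
  ∃ i, i < ℓ ∧ ((a i = u ∧ a ((i + 1) % ℓ) = v) ∨ (a i = v ∧ a ((i + 1) % ℓ) = u))

/-- Edge relation of the locus of the (open) walk `a 0, …, a ℓ`. -/
def walkEdge (a : ℕ → V) (ℓ : ℕ) (u v : V) : Prop :=
  ∃ i, i < ℓ ∧ ((a i = u ∧ a (i + 1) = v) ∨ (a i = v ∧ a (i + 1) = u))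

/-- The locus of the closed walk `a 0, …, a (ℓ-1)` contains no cycle. -/
def TourAcyclic (a : ℕ → V) (ℓ : ℕ) : Prop :=
  ¬ ∃ (c : ℕ → V) (n : ℕ), IsCycleOn (tourEdge a ℓ) c n

/-- The locus of the walk `a 0, …, a ℓ` contains no cycle. -/
def WalkAcyclic (a : ℕ → V) (ℓ : ℕ) : Prop :=
  ¬ ∃ (c : ℕ → V) (n : ℕ), IsCycleOn (walkEdge a ℓ) c n

/-- Every cycle of `G` of length at most `ℓ` lies entirely within `D`. -/
def QuasiAcyclic (G : SimpleGraph V) (D : Set V) (ℓ : ℕ) : Prop :=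
  ∀ (c : ℕ → V) (n : ℕ), n ≤ ℓ → IsCycleOn G.Adj c n → ∀ i, i < n → c i ∈ D

/-- Any two distinct vertices of `D` are adjacent. -/
def TotallyConnected (G : SimpleGraph V) (D : Set V) : Prop :=
  ∀ x ∈ D, ∀ y ∈ D, x ≠ y → G.Adj x y


open SimpleGraph

lemma getVert_eq_support_getElem {G : SimpleGraph V} {u v : V} (p : G.Walk u v) :
    ∀ i, (h : i < p.support.length) → p.getVert i = p.support[i] := by
  induction p with
  | nil =>
    intro i h
    have hi : i = 0 := by simp [Walk.support_nil] at h; omega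
    subst hi; simp
  | cons hadj q ih =>
    intro i h
    cases i with
    | zero => simp [Walk.getVert_zero]
    | succ k =>
      simp only [Walk.support_cons, List.length_cons] at h
      simpa [Walk.getVert_cons_succ, Walk.support_cons] using ih k (by omega)

lemma cycle_getVert_inj {G : SimpleGraph V} {u : V} {p : G.Walk u u} (hp : p.IsCycle)
    {s t : ℕ} (hs : s < p.length) (ht : t < p.length) (h : p.getVert s = p.getVert t) :
    s = t := by
  have hlen : p.support.length = p.length + 1 := p.length_support
  have htail : p.support.tail.length = p.length := by simp [hlen]
  have nod := hp.support_nodup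
  have key : ∀ k, k < p.length → ∃ k', 1 ≤ k' ∧ k' ≤ p.length ∧ p.getVert k' = p.getVert k ∧
      (k' = k ∨ (k = 0 ∧ k' = p.length)) := by
    intro k hk
    rcases Nat.eq_zero_or_pos k with rfl | hk0
    · exact ⟨p.length, by omega, le_rfl, by rw [Walk.getVert_length, Walk.getVert_zero], Or.inr ⟨rfl, rfl⟩⟩
    · exact ⟨k, hk0, hk.le, rfl, Or.inl rfl⟩
  obtain ⟨s', hs1, hs2, hs3, hs4⟩ := key s hs
  obtain ⟨t', ht1, ht2, ht3, ht4⟩ := key t ht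
  have h' : p.getVert s' = p.getVert t' := by rw [hs3, ht3, h]
  have hkey : ∀ k (hk : k < p.length), p.getVert (k + 1) = p.support.tail[k]'(by rw [htail]; exact hk) := by
    intro k hk
    rw [List.getElem_tail]
    exact getVert_eq_support_getElem p (k + 1) (by omega)
  have hgs := hkey (s' - 1) (by omega)
  have hgt := hkey (t' - 1) (by omega)
  rw [show s' - 1 + 1 = s' from by omega] at hgs
  rw [show t' - 1 + 1 = t' from by omega] at hgt
  rw [hgs, hgt] at h'
  have := nod.getElem_inj_iff.mp h'
  omega

lemma isCycle_to_isCycleOn {R : V → V → Prop} {G : SimpleGraph V}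
    (hGR : ∀ u v, G.Adj u v → R u v) {u : V} {p : G.Walk u u} (hp : p.IsCycle) :
    ∃ c n, IsCycleOn R c n := by
  refine ⟨p.getVert, p.length, hp.three_le_length, ?_, ?_⟩
  · intro s hs t ht h; exact cycle_getVert_inj hp hs ht h
  · intro s hs
    have hadj := hGR _ _ (p.adj_getVert_succ hs)
    rcases lt_or_eq_of_le (Nat.succ_le_of_lt hs) with h1 | h1
    · rwa [Nat.mod_eq_of_lt h1]
    · have h1' : s + 1 = p.length := h1
      rw [h1', Nat.mod_self, Walk.getVert_zero]
      have hu : p.getVert (s + 1) = u := by rw [h1', Walk.getVert_length]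
      rwa [hu] at hadj

def mkWalk (G : SimpleGraph V) (b : ℕ → V) :
    ∀ m, (∀ t, t < m → G.Adj (b t) (b (t + 1))) → G.Walk (b 0) (b m)
  | 0, _ => Walk.nil
  | (m + 1), h => (mkWalk G b m (fun t ht => h t (by omega))).concat (h m (by omega))

lemma mkWalk_support (G : SimpleGraph V) (b : ℕ → V) :
    ∀ m (h : ∀ t, t < m → G.Adj (b t) (b (t + 1))),
      ∀ x ∈ (mkWalk G b m h).support, ∃ t, t ≤ m ∧ b t = x := by
  intro m
  induction m with
  | zero => intro h x hx; simp [mkWalk, Walk.support_nil] at hx; exact ⟨0, le_rfl, hx.symm⟩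
  | succ m ih =>
    intro h x hx
    simp only [mkWalk, Walk.support_concat, List.concat_eq_append, List.mem_append,
      List.mem_singleton] at hx
    rcases hx with hx | hx
    · obtain ⟨t, ht, hb⟩ := ih _ x hx; exact ⟨t, by omega, hb⟩
    · exact ⟨m + 1, le_rfl, hx.symm⟩

def tourGraph (G : SimpleGraph V) (a : ℕ → V) (ℓ : ℕ) (ht : IsTour G a ℓ) :
    SimpleGraph V where
  Adj u v := tourEdge a ℓ u v
  symm := by
    constructor
    rintro u v ⟨k, hk, h⟩
    exact ⟨k, hk, h.symm⟩
  loopless := by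
    constructor
    rintro u ⟨k, hk, h⟩
    rcases h with ⟨h1, h2⟩ | ⟨h1, h2⟩ <;> exact (ht k hk).ne (h1.trans h2.symm)

/-- **Retracing in an acyclic closed walk** (Lemma 3.2 of the paper).  Let
`a 0, …, a (ℓ-1)` be a non-empty closed walk whose locus is acyclic, let `a i` be a
vertex of the walk different from `a 0`, with `i` the least and `j` the largest index
in `(0, ℓ)` at which this vertex occurs.  Then `a (j+1) = a (i-1)` (indices mod ℓ). -/
theorem retrace (G : SimpleGraph V) (a : ℕ → V) (ℓ : ℕ) (hℓ : 0 < ℓ)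
    (ht : IsTour G a ℓ) (hac : TourAcyclic a ℓ)
    (i j : ℕ) (hi0 : 0 < i) (hij : i ≤ j) (hjℓ : j < ℓ)
    (haij : a i = a j) (hne : a i ≠ a 0)
    (hmin : ∀ k, 0 < k → k < ℓ → a k = a i → i ≤ k)
    (hmax : ∀ k, 0 < k → k < ℓ → a k = a i → k ≤ j) :
    a ((j + 1) % ℓ) = a (i - 1) := by
  classical
  by_contra hxy
  set H := tourGraph G a ℓ ht with hH
  set x := a ((j + 1) % ℓ) with hx
  set y := a (i - 1) with hy
  have hiℓ : i < ℓ := lt_of_le_of_lt hij hjℓ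
  have him : i - 1 + 1 = i := by omega
  -- adjacencies in G
  have hadjy : G.Adj y (a i) := by
    have h := ht (i - 1) (by omega)
    rwa [him, Nat.mod_eq_of_lt hiℓ] at h
  have hadjx : G.Adj (a i) x := by
    have h := ht j hjℓ
    rwa [← haij] at h
  -- adjacencies in H
  have hHyv : H.Adj y (a i) := by
    exact ⟨i - 1, by omega, Or.inl ⟨rfl, by rw [him, Nat.mod_eq_of_lt hiℓ]⟩⟩
  have hHvx : H.Adj (a i) x := by
    exact ⟨j, hjℓ, Or.inl ⟨haij.symm, rfl⟩⟩
  -- the walk around the other side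
  set m := ℓ + i - 2 - j with hm
  set b : ℕ → V := fun t => a ((j + 1 + t) % ℓ) with hb
  have hbadj : ∀ t, t < m → H.Adj (b t) (b (t + 1)) := by
    intro t htm
    refine ⟨(j + 1 + t) % ℓ, Nat.mod_lt _ hℓ, Or.inl ⟨rfl, ?_⟩⟩
    show a (((j + 1 + t) % ℓ + 1) % ℓ) = a ((j + 1 + (t + 1)) % ℓ)
    rw [Nat.mod_add_mod]
    congr 1
  have hbv : ∀ t, t ≤ m → b t ≠ a i := by
    intro t htm hbt
    have hbt' : a ((j + 1 + t) % ℓ) = a i := hbt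
    rcases lt_or_ge (j + 1 + t) ℓ with hlt | hge
    · rw [Nat.mod_eq_of_lt hlt] at hbt'
      have := hmax (j + 1 + t) (by omega) hlt hbt'
      omega
    · have hk : (j + 1 + t) % ℓ = j + 1 + t - ℓ := by
        rw [Nat.mod_eq_sub_mod hge, Nat.mod_eq_of_lt (by omega)]
      rw [hk] at hbt'
      rcases Nat.eq_zero_or_pos (j + 1 + t - ℓ) with h0 | h0
      · rw [h0] at hbt'
        exact hne hbt'.symm
      · have := hmin (j + 1 + t - ℓ) h0 (by omega) hbt'
        omega
  have hb0 : b 0 = x := rfl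
  have hbm : b m = y := by
    show a ((j + 1 + m) % ℓ) = y
    rw [show j + 1 + m = ℓ + (i - 1) from by omega, Nat.add_mod_left,
      Nat.mod_eq_of_lt (by omega)]
  -- the path from x to y avoiding a i
  set w := (mkWalk H b m hbadj).copy hb0 hbm with hw
  set p := w.bypass with hpdef
  have hp : p.IsPath := SimpleGraph.Walk.bypass_isPath w
  have hvp : a i ∉ p.support := by
    intro hmem
    have hmem' : a i ∈ w.support := SimpleGraph.Walk.support_bypass_subset w hmem
    rw [hw, SimpleGraph.Walk.support_copy] at hmem'
    obtain ⟨t, htm, hbt⟩ := mkWalk_support H b m hbadj (a i) hmem'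
    exact hbv t htm hbt
  -- the cycle
  have hxyne : x ≠ y := hxy
  have hvx : a i ≠ x := hadjx.ne
  have hvy : a i ≠ y := hadjy.ne'
  have hP : (p.cons hHvx).IsPath := hp.cons hvp
  have hcyc : (SimpleGraph.Walk.cons hHyv (p.cons hHvx)).IsCycle := by
    refine SimpleGraph.Path.cons_isCycle ⟨p.cons hHvx, hP⟩ hHyv ?_
    intro hmem
    rw [SimpleGraph.Walk.edges_cons, List.mem_cons] at hmem
    rcases hmem with hmem | hmem
    · rw [Sym2.eq_iff] at hmem
      rcases hmem with ⟨h1, h2⟩ | ⟨h1, h2⟩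
      · exact hvy h1.symm
      · exact hxyne h1.symm
    · exact hvp (SimpleGraph.Walk.snd_mem_support_of_mem_edges p hmem)
  exact hac (isCycle_to_isCycleOn (fun u v h => h) hcyc)
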